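/- Let (M,g) be a perfect fluid space-time of dimension n ≥ 4 with R_{kl} = A g_{kl} + B u_k u_l, u^j u_j = −1, ∇_m C_{jkl}{}^m = 0, and B nowhere zero. If moreover u is closed (∇_k u_j = ∇_j u_k), then u is torse-forming: ∇_k u_j = ω_k u_j + f g_{kj}, where ω_k = ∇_k γ /(2B(n−1)), f = −u^m ∇_m γ /(2B(n−1)), and γ = (n−2)A + B. -/
import Mathlib


/-!
STATEMENT 4.  Perfect fluid space-time with divergence-free Weyl tensor,
B nowhere zero, and u closed.  Then u is torse-forming:
∇_k u_j = ω_k u_j + f g_{kj} with ω_k = ∇_k γ/(2B(n-1)),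
f = -u^m∇_m γ/(2B(n-1)), γ = (n-2)A + B.
Component-level formalization, same conventions as before.
-/
theorem perfectFluid_torse_forming
    (n : ℕ) (hn : 4 ≤ n) (M : Type*)
    (g ginv : M → Fin n → Fin n → ℝ)
    (A B : M → ℝ) (DA DB : M → Fin n → ℝ)
    (u : M → Fin n → ℝ) (Du : M → Fin n → Fin n → ℝ)
    (hg : ∀ x i j, g x i j = g x j i)
    (hginv : ∀ x i j, ∑ m, ginv x i m * g x m j = if i = j then (1:ℝ) else 0)
    (hginvsymm : ∀ x i j, ginv x i j = ginv x j i)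
    -- u is a unit timelike vector field: u^j u_j = -1
    (hunit : ∀ x, ∑ i, ∑ j, ginv x i j * u x i * u x j = -1)
    -- u has constant length, hence u^l ∇_k u_l = 0
    (hDu : ∀ x k, ∑ l, ∑ m, ginv x l m * u x m * Du x k l = 0)
    -- contracted Bianchi identity ∇^m R_{jm} = (1/2)∇_j R
    (hBianchi : ∀ x j, ∑ a, ∑ m, ginv x a m *
        (DA x a * g x m j + DB x a * u x m * u x j
          + B x * (Du x a m * u x j + u x m * Du x a j))
      = (1/2) * ((n:ℝ) * DA x j - DB x j))
    -- ∇_m C_{jkl}{}^m = 0, in its equivalent Codazzi form for the Ricci tensor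
    (hWeyl : ∀ x k l j,
        (DA x k * g x j l + DB x k * u x j * u x l
          + B x * (Du x k j * u x l + u x j * Du x k l))
        - (DA x l * g x j k + DB x l * u x j * u x k
          + B x * (Du x l j * u x k + u x j * Du x l k))
      = (1/(2*((n:ℝ) - 1))) * (g x j l * ((n:ℝ) * DA x k - DB x k)
          - g x j k * ((n:ℝ) * DA x l - DB x l)))
    -- B nowhere zero
    (hB : ∀ x, B x ≠ 0)
    -- u is closed
    (hclosed : ∀ x k j, Du x k j = Du x j k) :
    -- conclusion: u is torse-forming with the given ω and f
    ∀ x k j, Du x k j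
      = ((((n:ℝ) - 2) * DA x k + DB x k) / (2 * B x * ((n:ℝ) - 1))) * u x j
        + (-(∑ m, ∑ a, ginv x m a * u x a * (((n:ℝ) - 2) * DA x m + DB x m))
            / (2 * B x * ((n:ℝ) - 1))) * g x k j := by
  intro x
  have hn4 : (4:ℝ) ≤ (n:ℝ) := by exact_mod_cast hn
  have hn1 : ((n:ℝ) - 1) ≠ 0 := by linarith
  have hn2 : ((n:ℝ) - 2) ≠ 0 := by linarith
  set U : Fin n → ℝ := fun i => ∑ a, ginv x i a * u x a with hUdef
  have hUg1 : ∀ p, (∑ m, U m * g x m p) = u x p := by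
    intro p
    have h1 : ∀ m, U m * g x m p = ∑ a, u x a * (ginv x a m * g x m p) := by
      intro m
      simp only [hUdef, Finset.sum_mul]
      exact Finset.sum_congr rfl fun a _ => by rw [hginvsymm]; ring
    rw [Finset.sum_congr rfl fun m _ => h1 m, Finset.sum_comm]
    have h2 : ∀ a, (∑ m, u x a * (ginv x a m * g x m p)) = u x a * (if a = p then (1:ℝ) else 0) := by
      intro a
      rw [← Finset.mul_sum, hginv]
    rw [Finset.sum_congr rfl fun a _ => h2 a]
    simp
  have hUu : (∑ m, U m * u x m) = -1 := by
    rw [← hunit x]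
    simp only [hUdef, Finset.sum_mul]
    exact Finset.sum_congr rfl fun m _ => Finset.sum_congr rfl fun a _ => by ring
  have hUDu1 : ∀ p, (∑ m, U m * Du x p m) = 0 := by
    intro p
    rw [← hDu x p]
    refine Finset.sum_congr rfl fun m _ => ?_
    simp only [hUdef, Finset.sum_mul]
  have hUDu2 : ∀ p, (∑ m, U m * Du x m p) = 0 := by
    intro p
    rw [← hUDu1 p]
    exact Finset.sum_congr rfl fun m _ => by rw [hclosed]
  set al := ∑ m, U m * DA x m with hal
  set d := ∑ m, U m * DB x m with hd
  set th := ∑ a, ∑ m, ginv x a m * Du x a m with hth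
  have master : ∀ (p q : Fin n) (c1 c2 c3 c4 c5 c6 c7 c8 c9 : ℝ),
      (∑ m, U m * (c1 * g x m p + c2 * g x m q + c3 * u x m + c4 * Du x p m + c5 * Du x q m
        + c6 * Du x m p + c7 * Du x m q + c8 * DA x m + c9 * DB x m))
      = c1 * u x p + c2 * u x q - c3 + c8 * al + c9 * d := by
    intro p q c1 c2 c3 c4 c5 c6 c7 c8 c9
    have h1 : ∀ m, U m * (c1 * g x m p + c2 * g x m q + c3 * u x m + c4 * Du x p m + c5 * Du x q m
        + c6 * Du x m p + c7 * Du x m q + c8 * DA x m + c9 * DB x m)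
        = c1 * (U m * g x m p) + c2 * (U m * g x m q) + c3 * (U m * u x m)
          + c4 * (U m * Du x p m) + c5 * (U m * Du x q m) + c6 * (U m * Du x m p)
          + c7 * (U m * Du x m q) + c8 * (U m * DA x m) + c9 * (U m * DB x m) := fun m => by ring
    rw [Finset.sum_congr rfl fun m _ => h1 m]
    rw [Finset.sum_add_distrib, Finset.sum_add_distrib, Finset.sum_add_distrib,
        Finset.sum_add_distrib, Finset.sum_add_distrib, Finset.sum_add_distrib,
        Finset.sum_add_distrib, Finset.sum_add_distrib]
    rw [← Finset.mul_sum, ← Finset.mul_sum, ← Finset.mul_sum, ← Finset.mul_sum, ← Finset.mul_sum,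
        ← Finset.mul_sum, ← Finset.mul_sum, ← Finset.mul_sum, ← Finset.mul_sum]
    rw [hUg1, hUg1, hUu, hUDu1, hUDu1, hUDu2, hUDu2, ← hal, ← hd]
    ring
  -- contracted Bianchi identity
  have eq1 : ∀ p, ((n:ℝ)-2) * DA x p - DB x p = 2 * (d + B x * th) * u x p := by
    intro p
    have hb := hBianchi x p
    have h1 : ∀ a : Fin n, (∑ m, ginv x a m * (DA x a * g x m p + DB x a * u x m * u x p
          + B x * (Du x a m * u x p + u x m * Du x a p)))
        = DA x a * (if a = p then (1:ℝ) else 0) + (U a * DB x a) * u x p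
          + (B x * u x p) * (∑ m, ginv x a m * Du x a m) + B x * (U a * Du x a p) := by
      intro a
      rw [← hginv x a p]
      simp only [hUdef, Finset.mul_sum, Finset.sum_mul]
      rw [← Finset.sum_add_distrib, ← Finset.sum_add_distrib, ← Finset.sum_add_distrib]
      exact Finset.sum_congr rfl fun m _ => by ring
    rw [Finset.sum_congr rfl fun a _ => h1 a] at hb
    rw [Finset.sum_add_distrib, Finset.sum_add_distrib, Finset.sum_add_distrib] at hb
    simp only [mul_ite, mul_one, mul_zero, Finset.sum_ite_eq', Finset.mem_univ, if_true] at hb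
    rw [← Finset.sum_mul, ← Finset.mul_sum, ← Finset.mul_sum, ← hth] at hb
    have h2 : (∑ a, U a * DB x a) = d := hd.symm
    have h3 : (∑ a, U a * Du x a p) = 0 := hUDu2 p
    rw [h2, h3] at hb
    linear_combination (-2 : ℝ) * hb
  -- first Weyl contraction (over j), denominators cleared
  have eqW : ∀ p q, 2*((n:ℝ)-1) * ((DA x p - DB x p) * u x q - B x * Du x p q
        - ((DA x q - DB x q) * u x p - B x * Du x q p))
      = u x q * ((n:ℝ)*DA x p - DB x p) - u x p * ((n:ℝ)*DA x q - DB x q) := by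
    intro p q
    have hs : (∑ m, U m * ((DA x p * g x m q + DB x p * u x m * u x q
          + B x * (Du x p m * u x q + u x m * Du x p q))
        - (DA x q * g x m p + DB x q * u x m * u x p
          + B x * (Du x q m * u x p + u x m * Du x q p))))
        = ∑ m, U m * ((1/(2*((n:ℝ) - 1))) * (g x m q * ((n:ℝ) * DA x p - DB x p)
          - g x m p * ((n:ℝ) * DA x q - DB x q))) :=
      Finset.sum_congr rfl fun m _ => by rw [hWeyl x p q m]
    have hL : (∑ m, U m * ((DA x p * g x m q + DB x p * u x m * u x q
          + B x * (Du x p m * u x q + u x m * Du x p q))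
        - (DA x q * g x m p + DB x q * u x m * u x p
          + B x * (Du x q m * u x p + u x m * Du x q p))))
        = (-(DA x q)) * u x p + (DA x p) * u x q
          - (DB x p * u x q + B x * Du x p q - DB x q * u x p - B x * Du x q p)
          + 0 * al + 0 * d := by
      rw [← master p q (-(DA x q)) (DA x p)
        (DB x p * u x q + B x * Du x p q - DB x q * u x p - B x * Du x q p)
        (B x * u x q) (-(B x * u x p)) 0 0 0 0]
      exact Finset.sum_congr rfl fun m _ => by ring
    have hR : (∑ m, U m * ((1/(2*((n:ℝ) - 1))) * (g x m q * ((n:ℝ) * DA x p - DB x p)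
          - g x m p * ((n:ℝ) * DA x q - DB x q))))
        = (-((1/(2*((n:ℝ) - 1))) * ((n:ℝ) * DA x q - DB x q))) * u x p
          + ((1/(2*((n:ℝ) - 1))) * ((n:ℝ) * DA x p - DB x p)) * u x q - 0
          + 0 * al + 0 * d := by
      rw [← master p q (-((1/(2*((n:ℝ) - 1))) * ((n:ℝ) * DA x q - DB x q)))
        ((1/(2*((n:ℝ) - 1))) * ((n:ℝ) * DA x p - DB x p)) 0 0 0 0 0 0 0]
      exact Finset.sum_congr rfl fun m _ => by ring
    rw [hL, hR] at hs
    field_simp at hs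
    linear_combination hs
  -- DA and DB are proportional to u
  have hDAsym : ∀ p q, DA x p * u x q = DA x q * u x p := by
    intro p q
    have e1 := eq1 p
    have e2 := eq1 q
    have w := eqW p q
    rw [hclosed x p q] at w
    have hz : ((n:ℝ)-2)^2 * (DA x p * u x q - DA x q * u x p) = 0 := by
      linear_combination ((n:ℝ) - 3/2) * u x q * e1 - ((n:ℝ) - 3/2) * u x p * e2 - (1/2) * w
    have h2 : ((n:ℝ)-2)^2 ≠ 0 := pow_ne_zero _ hn2
    rcases mul_eq_zero.mp hz with h | h
    · exact absurd h h2
    · linarith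
  have hDBsym : ∀ p q, DB x p * u x q = DB x q * u x p := by
    intro p q
    have e1 := eq1 p
    have e2 := eq1 q
    linear_combination ((n:ℝ)-2) * hDAsym p q - u x q * e1 + u x p * e2
  have hDB : ∀ p, DB x p = -d * u x p := by
    intro p
    have h1 : DB x p * (∑ m, U m * u x m) = (∑ m, U m * DB x m) * u x p := by
      rw [Finset.mul_sum, Finset.sum_mul]
      exact Finset.sum_congr rfl fun m _ => by linear_combination U m * hDBsym p m
    rw [hUu, ← hd] at h1
    linarith
  -- second Weyl contraction (over l)
  have con2 : ∀ p q, 2*((n:ℝ)-1) * (DA x p * u x q - DB x p * u x q - B x * Du x p q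
        - al * g x q p - d * u x q * u x p)
      = ((n:ℝ)*DA x p - DB x p) * u x q - g x q p * ((n:ℝ)*al - d) := by
    intro p q
    have hs : (∑ m, U m * ((DA x p * g x q m + DB x p * u x q * u x m
          + B x * (Du x p q * u x m + u x q * Du x p m))
        - (DA x m * g x q p + DB x m * u x q * u x p
          + B x * (Du x m q * u x p + u x q * Du x m p))))
        = ∑ m, U m * ((1/(2*((n:ℝ) - 1))) * (g x q m * ((n:ℝ) * DA x p - DB x p)
          - g x q p * ((n:ℝ) * DA x m - DB x m))) :=
      Finset.sum_congr rfl fun m _ => by rw [hWeyl x p m q]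
    have hL : (∑ m, U m * ((DA x p * g x q m + DB x p * u x q * u x m
          + B x * (Du x p q * u x m + u x q * Du x p m))
        - (DA x m * g x q p + DB x m * u x q * u x p
          + B x * (Du x m q * u x p + u x q * Du x m p))))
        = 0 * u x p + DA x p * u x q
          - (DB x p * u x q + B x * Du x p q)
          + (-(g x q p)) * al + (-(u x q * u x p)) * d := by
      rw [← master p q 0 (DA x p) (DB x p * u x q + B x * Du x p q) (B x * u x q) 0
        (-(B x * u x q)) (-(B x * u x p)) (-(g x q p)) (-(u x q * u x p))]
      exact Finset.sum_congr rfl fun m _ => by rw [hg x q m]; ring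
    have hR : (∑ m, U m * ((1/(2*((n:ℝ) - 1))) * (g x q m * ((n:ℝ) * DA x p - DB x p)
          - g x q p * ((n:ℝ) * DA x m - DB x m))))
        = 0 * u x p + ((1/(2*((n:ℝ) - 1))) * ((n:ℝ) * DA x p - DB x p)) * u x q - 0
          + (-((1/(2*((n:ℝ) - 1))) * g x q p * (n:ℝ))) * al
          + ((1/(2*((n:ℝ) - 1))) * g x q p) * d := by
      rw [← master p q 0 ((1/(2*((n:ℝ) - 1))) * ((n:ℝ) * DA x p - DB x p)) 0 0 0 0 0
        (-((1/(2*((n:ℝ) - 1))) * g x q p * (n:ℝ))) ((1/(2*((n:ℝ) - 1))) * g x q p)]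
      exact Finset.sum_congr rfl fun m _ => by rw [hg x q m]; ring
    rw [hL, hR] at hs
    field_simp at hs
    linear_combination hs
  -- conclusion
  intro k j
  have hS : (∑ m, ∑ a, ginv x m a * u x a * (((n:ℝ) - 2) * DA x m + DB x m))
      = ((n:ℝ)-2) * al + d := by
    have h1 : ∀ m : Fin n, (∑ a, ginv x m a * u x a * (((n:ℝ) - 2) * DA x m + DB x m))
        = ((n:ℝ)-2) * (U m * DA x m) + U m * DB x m := by
      intro m
      simp only [hUdef, Finset.sum_mul, Finset.mul_sum, ← Finset.sum_add_distrib]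
      exact Finset.sum_congr rfl fun a _ => by ring
    rw [Finset.sum_congr rfl fun m _ => h1 m, Finset.sum_add_distrib, ← Finset.mul_sum,
      ← hal, ← hd]
  rw [hS]
  have hc2 := con2 k j
  have hdbk := hDB k
  have hgkj : g x k j = g x j k := hg x k j
  have hBx := hB x
  field_simp
  linear_combination (-1 : ℝ) * hc2 + (-(2*(n:ℝ)-2) * u x j) * hdbk + (((n:ℝ)-2)*al + d) * hgkj
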